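/- Let X = (V, E, rt, V_\bullet) be a 2-colored rooted tree with rt \in V_\bullet and k an essentially positive index on X. Suppose V = V_1 \sqcup V_2, E = E_1 \sqcup E_2 \sqcup \{f\}, V_\bullet = V_{1,\bullet} \sqcup V_{2,\bullet}, with rt \in V_{1,\bullet}, and there is an isomorphism F : (V_1, E_1, rt) \to (V_2, E_2, F(rt)) of rooted trees with F(V_{1,\bullet}) = V_{2,\bullet}, such that k_f is odd and k_{\{a,b\}} = k_{\{F(a),F(b)\}} for every edge \{a,b\} \in E_1. Then \Phi(X, k) := \sum_{v \in V_\bullet} (-1)^{k_{P(rt,v)}} (X_v, k) = 0 in 2CRT, where X_v denotes the same tree re-rooted at v and k_{P(rt,v)} = \sum_{e \in P(rt,v)} k_e. -/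

import Mathlib

attribute [local instance] Classical.propDecidable

/-- A 2-colored rooted tree X = (V, E, rt, V_•): a finite tree (V, E) with a root
rt ∈ V and a subset V_• ⊆ V containing all terminal (degree-1) vertices. -/
structure CRT : Type 1 where
  V : Type
  [fV : Fintype V]
  [dV : DecidableEq V]
  G : SimpleGraph V
  isTree : G.IsTree
  rt : V
  Vb : Finset V
  terminal_mem : ∀ v : V, (G.neighborSet v).ncard = 1 → v ∈ Vb

attribute [instance] CRT.fV CRT.dV

/-- The unique path between two vertices of a tree, as a walk. -/
noncomputable def tpath {V : Type} (G : SimpleGraph V) (h : G.IsTree) (a b : V) :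
    G.Walk a b :=
  (((SimpleGraph.isTree_iff_existsUnique_path).mp h).2 a b).exists.choose

/-- P(a,b): the list of edges of the path from a to b. -/
noncomputable def CRT.pEdges (A : CRT) (a b : A.V) : List (Sym2 A.V) :=
  (tpath A.G A.isTree a b).edges

/-- k_{P(a,b)} = ∑_{e ∈ P(a,b)} k_e. -/
noncomputable def CRT.kP (A : CRT) (k : Sym2 A.V → ℕ) (a b : A.V) : ℕ :=
  ((A.pEdges a b).map k).sum

/-- An index k on X is essentially positive if k_{P(v,v')} > 0 for all distinct
v, v' ∈ V_•. -/
def CRT.EssPos (A : CRT) (k : Sym2 A.V → ℕ) : Prop :=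
  ∀ a ∈ A.Vb, ∀ b ∈ A.Vb, a ≠ b → 0 < A.kP k a b

/-- The finite multiple harmonic sum ζ_M(X; k) attached to a 2-colored rooted tree:
∑_{(m_v) ∈ ℤ_{≥1}^{V_•}, Σ m_v = M} ∏_{e ∈ E} (∑_{v ∈ V_• : e ∈ P(rt,v)} m_v)^{-k_e}. -/
noncomputable def CRT.zetaM (A : CRT) (k : Sym2 A.V → ℕ) (M : ℕ) : ℚ :=
  ∑ m ∈ (A.Vb.pi fun _ => Finset.Icc 1 M).filter
      (fun m => (∑ v ∈ A.Vb.attach, m v.1 v.2) = M),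
    ∏ e ∈ Finset.univ.filter (fun e : Sym2 A.V => e ∈ A.G.edgeSet),
      ((∑ v ∈ A.Vb.attach.filter (fun v => e ∈ A.pEdges A.rt v.1),
          (m v.1 v.2 : ℚ))⁻¹) ^ k e

/-- Re-rooting X_v = (V, E, v, V_•). -/
noncomputable def CRT.reroot (A : CRT) (v : A.V) : CRT :=
  ⟨A.V, A.G, A.isTree, v, A.Vb, A.terminal_mem⟩

/-- A generator of 2CRT: a 2-colored rooted tree with rt ∈ V_• together with an
essentially positive index. -/
structure ICRT : Type 1 where
  X : CRT
  rootMem : X.rt ∈ X.Vb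
  k : Sym2 X.V → ℕ
  essPos : X.EssPos k

/-- Isomorphism of pairs (X, k): a bijection of vertices preserving adjacency, the root,
the set V_• and the index on edges (trees are non-planar, so pairs are identified up to
such isomorphisms). -/
def ICRT.Iso (A B : ICRT) : Prop :=
  ∃ f : A.X.V ≃ B.X.V,
    (∀ a b, A.X.G.Adj a b ↔ B.X.G.Adj (f a) (f b)) ∧
    f A.X.rt = B.X.rt ∧
    (∀ v, v ∈ A.X.Vb ↔ f v ∈ B.X.Vb) ∧
    (∀ a b, A.X.G.Adj a b → A.k s(a, b) = B.k s(f a, f b))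

/-- The ℚ-vector space 2CRT: formal ℚ-linear combinations of pairs (X, k) up to
isomorphism. -/
noncomputable abbrev TwoCRT : Type 1 := (Quot ICRT.Iso) →₀ ℚ

/-- Re-rooting a generator at v ∈ V_•. -/
noncomputable def ICRT.reroot (A : ICRT) (v : A.X.V) (hv : v ∈ A.X.Vb) : ICRT :=
  ⟨A.X.reroot v, hv, A.k, A.essPos⟩

/-- The symmetrization map on generators:
Φ(X, k) = ∑_{v ∈ V_•} (-1)^{k_{P(rt,v)}} (X_v, k) ∈ 2CRT. -/
noncomputable def Phi (A : ICRT) : TwoCRT :=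
  ∑ v ∈ A.X.Vb.attach,
    ((-1 : ℚ) ^ A.X.kP A.k A.X.rt v.1) •
      Finsupp.single (Quot.mk ICRT.Iso (A.reroot v.1 v.2)) (1 : ℚ)


section AuxTree
open SimpleGraph

variable {V : Type} {G : SimpleGraph V} (hT : G.IsTree)

lemma tpath_isPath (a b : V) : (tpath G hT a b).IsPath :=
  ((SimpleGraph.isTree_iff_existsUnique_path.mp hT).2 a b).exists.choose_spec

lemma tpath_unique {a b : V} (p : G.Walk a b) (hp : p.IsPath) : p = tpath G hT a b :=
  ((SimpleGraph.isTree_iff_existsUnique_path.mp hT).2 a b).unique hp (tpath_isPath hT a b)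

/-- sum of k over the edges of a walk. -/
noncomputable def ksum (k : Sym2 V → ℕ) {a b : V} (p : G.Walk a b) : ℕ :=
  (p.edges.map k).sum

lemma tpath_self (a : V) : tpath G hT a a = Walk.nil :=
  (tpath_unique hT Walk.nil Walk.IsPath.nil).symm

lemma ksum_cons (k : Sym2 V → ℕ) {a a' b : V} (h : G.Adj a a') (p : G.Walk a' b) :
    ksum k (Walk.cons h p) = k s(a, a') + ksum k p := by
  simp [ksum, Walk.edges_cons]

lemma ksum_append (k : Sym2 V → ℕ) {a b c : V} (p : G.Walk a b) (q : G.Walk b c) :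
    ksum k (p.append q) = ksum k p + ksum k q := by
  simp [ksum, Walk.edges_append]

lemma ksum_copy (k : Sym2 V → ℕ) {a b a' b' : V} (p : G.Walk a b) (h1 : a = a')
    (h2 : b = b') : ksum k (p.copy h1 h2) = ksum k p := by
  subst h1; subst h2; rfl

lemma kP_adj [DecidableEq V] (k : Sym2 V → ℕ) {a a' : V} (b : V) (h : G.Adj a a') :
    (ksum k (tpath G hT a b) : ZMod 2) = k s(a, a') + ksum k (tpath G hT a' b) := by
  by_cases hm : a ∈ (tpath G hT a' b).support
  · set p := tpath G hT a' b with hp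
    have hpath : p.IsPath := tpath_isPath hT a' b
    have h1 : p.takeUntil a hm = Walk.cons h.symm Walk.nil := by
      refine (tpath_unique hT _ (hpath.takeUntil hm)).trans ?_
      exact (tpath_unique hT _ (Walk.IsPath.nil.cons (by simpa using h.ne'))).symm
    have h2 : p.dropUntil a hm = tpath G hT a b :=
      tpath_unique hT _ (hpath.dropUntil hm)
    have h3 : ksum k p = ksum k (p.takeUntil a hm) + ksum k (p.dropUntil a hm) := by
      conv_lhs => rw [← Walk.take_spec p hm]
      unfold ksum
      rw [Walk.edges_append, List.map_append, List.sum_append]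
    rw [h1, h2] at h3
    have h4 : ksum k (tpath G hT a' b) = k s(a, a') + ksum k (tpath G hT a b) := by
      rw [h3, ksum_cons]
      simp [ksum, Sym2.eq_swap]
    rw [h4]
    push_cast
    rw [← add_assoc, CharTwo.add_self_eq_zero, zero_add]
  · have hq : (Walk.cons h (tpath G hT a' b)).IsPath :=
      (tpath_isPath hT a' b).cons hm
    have : Walk.cons h (tpath G hT a' b) = tpath G hT a b := tpath_unique hT _ hq
    rw [← this, ksum_cons]
    push_cast
    ring

lemma ksum_walk_parity [DecidableEq V] (k : Sym2 V → ℕ) {a b : V} (p : G.Walk a b) :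
    (ksum k p : ZMod 2) = ksum k (tpath G hT a b) := by
  induction p with
  | nil => rw [tpath_self hT]
  | @cons x y z h q ih =>
      rw [ksum_cons]
      push_cast
      rw [ih, ← kP_adj hT k z h]

end AuxTree

/-- if X decomposes as two copies of a rooted tree (V₁,E₁,rt) and
(V₂,E₂,F(rt)), exchanged by an isomorphism F preserving colors and index entries, joined
by the single edge f = {u, F(u)} whose index entry k_f is odd, then
Φ(X,k) = ∑_{v ∈ V_•} (-1)^{k_{P(rt,v)}} (X_v, k) = 0 in 2CRT. -/
theorem stmt11 (A : ICRT) (V1 V2 : Set A.X.V) (u w : A.X.V) (F : A.X.V → A.X.V)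
    (hdisj : Disjoint V1 V2) (hunion : V1 ∪ V2 = Set.univ)
    (huV : u ∈ V1) (hwV : w ∈ V2)
    (hadj : A.X.G.Adj u w)
    (hcross : ∀ a b, A.X.G.Adj a b → s(a, b) ≠ s(u, w) →
      ((a ∈ V1 ∧ b ∈ V1) ∨ (a ∈ V2 ∧ b ∈ V2)))
    (hrt : A.X.rt ∈ V1)
    (hFmaps : ∀ v ∈ V1, F v ∈ V2)
    (hFbij : ∀ y ∈ V2, ∃! v, v ∈ V1 ∧ F v = y)
    (hFadj : ∀ a ∈ V1, ∀ b ∈ V1, (A.X.G.Adj a b ↔ A.X.G.Adj (F a) (F b)))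
    (hFVb : ∀ v ∈ V1, (v ∈ A.X.Vb ↔ F v ∈ A.X.Vb))
    (hFk : ∀ a ∈ V1, ∀ b ∈ V1, A.X.G.Adj a b → A.k s(a, b) = A.k s(F a, F b))
    (hodd : Odd (A.k s(u, w)))
    (hwFu : w = F u) :
    Phi A = 0 := by
  classical
  have hV2 : ∀ v : A.X.V, v ∉ V1 → v ∈ V2 := by
    intro v h
    have hmem : v ∈ V1 ∪ V2 := by rw [hunion]; trivial
    exact hmem.resolve_left h
  have hnot1 : ∀ v ∈ V2, v ∉ V1 := fun v hv h1 => Set.disjoint_left.mp hdisj h1 hv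
  set Finv : A.X.V → A.X.V := fun y => if h : y ∈ V2 then (hFbij y h).choose else y
    with hFinvdef
  have hFinv : ∀ y ∈ V2, Finv y ∈ V1 ∧ F (Finv y) = y := by
    intro y hy
    simp only [hFinvdef, dif_pos hy]
    exact (hFbij y hy).choose_spec.1
  have hFinvF : ∀ v ∈ V1, Finv (F v) = v := by
    intro v hv
    have hFv : F v ∈ V2 := hFmaps v hv
    simp only [hFinvdef, dif_pos hFv]
    exact ((hFbij (F v) hFv).choose_spec.2 v ⟨hv, rfl⟩).symm
  set σ : A.X.V → A.X.V := fun v => if v ∈ V1 then F v else Finv v with hσdef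
  have hσ1 : ∀ v ∈ V1, σ v = F v := fun v hv => by simp only [hσdef, if_pos hv]
  have hσ2 : ∀ v ∈ V2, σ v = Finv v := fun v hv => by
    simp only [hσdef, if_neg (hnot1 v hv)]
  have hσm1 : ∀ v ∈ V1, σ v ∈ V2 := fun v hv => (hσ1 v hv) ▸ hFmaps v hv
  have hσm2 : ∀ v ∈ V2, σ v ∈ V1 := fun v hv => (hσ2 v hv) ▸ (hFinv v hv).1
  have hσinv : Function.Involutive σ := by
    intro v
    by_cases hv : v ∈ V1
    · rw [hσ1 v hv, hσ2 _ (hFmaps v hv), hFinvF v hv]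
    · have hv2 := hV2 v hv
      rw [hσ2 v hv2, hσ1 _ (hFinv v hv2).1, (hFinv v hv2).2]
  have hσu : σ u = w := by rw [hσ1 u huV, ← hwFu]
  have hσw : σ w = u := by rw [hσ2 w hwV, hwFu, hFinvF u huV]
  have hadj' : ∀ a b : A.X.V, A.X.G.Adj a b → A.X.G.Adj (σ a) (σ b) := by
    intro a b hab
    by_cases he : s(a, b) = s(u, w)
    · rcases Sym2.eq_iff.mp he with ⟨rfl, rfl⟩ | ⟨rfl, rfl⟩
      · rw [hσu, hσw]; exact hadj.symm
      · rw [hσu, hσw]; exact hadj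
    · rcases hcross a b hab he with ⟨ha, hb⟩ | ⟨ha, hb⟩
      · rw [hσ1 a ha, hσ1 b hb]; exact (hFadj a ha b hb).mp hab
      · rw [hσ2 a ha, hσ2 b hb]
        apply (hFadj _ (hFinv a ha).1 _ (hFinv b hb).1).mpr
        rw [(hFinv a ha).2, (hFinv b hb).2]; exact hab
  have hσadj : ∀ a b : A.X.V, A.X.G.Adj a b ↔ A.X.G.Adj (σ a) (σ b) := by
    intro a b
    constructor
    · exact hadj' a b
    · intro h
      have h2 := hadj' _ _ h
      rwa [hσinv a, hσinv b] at h2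
  have hkσ : ∀ a b : A.X.V, A.X.G.Adj a b → A.k s(a, b) = A.k s(σ a, σ b) := by
    intro a b hab
    by_cases he : s(a, b) = s(u, w)
    · rcases Sym2.eq_iff.mp he with ⟨rfl, rfl⟩ | ⟨rfl, rfl⟩
      · rw [hσu, hσw, Sym2.eq_swap]
      · rw [hσu, hσw, Sym2.eq_swap]
    · rcases hcross a b hab he with ⟨ha, hb⟩ | ⟨ha, hb⟩
      · rw [hσ1 a ha, hσ1 b hb]; exact hFk a ha b hb hab
      · rw [hσ2 a ha, hσ2 b hb]
        have h1 := (hFinv a ha).2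
        have h2 := (hFinv b hb).2
        have hadj2 : A.X.G.Adj (Finv a) (Finv b) := by
          apply (hFadj _ (hFinv a ha).1 _ (hFinv b hb).1).mpr
          rw [h1, h2]; exact hab
        have h3 := hFk _ (hFinv a ha).1 _ (hFinv b hb).1 hadj2
        rw [h1, h2] at h3
        exact h3.symm
  have hVbσ : ∀ v : A.X.V, v ∈ A.X.Vb ↔ σ v ∈ A.X.Vb := by
    intro v
    by_cases hv : v ∈ V1
    · rw [hσ1 v hv]; exact hFVb v hv
    · have hv2 := hV2 v hv
      rw [hσ2 v hv2]
      have h1 := hFVb (Finv v) (hFinv v hv2).1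
      rw [(hFinv v hv2).2] at h1
      exact h1.symm
  let σh : A.X.G →g A.X.G := ⟨σ, fun {a b} h => hadj' a b h⟩
  have hmapks : ∀ {a b : A.X.V} (p : A.X.G.Walk a b),
      ksum A.k (p.map σh) = ksum A.k p := by
    intro a b p
    induction p with
    | nil => rfl
    | @cons x y z h q ih =>
        rw [SimpleGraph.Walk.map_cons, ksum_cons, ksum_cons, ih]
        congr 1
        exact (hkσ x y h).symm
  have key : ∀ v : A.X.V, (A.X.kP A.k A.X.rt (σ v) : ZMod 2)
      = A.X.kP A.k A.X.rt v + A.k s(u, w) := by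
    intro v
    have kPdef : ∀ a b : A.X.V,
        A.X.kP A.k a b = ksum A.k (tpath A.X.G A.X.isTree a b) := fun _ _ => rfl
    set T := A.X.isTree with hT
    let W1 : A.X.G.Walk A.X.rt (σ v) :=
      (tpath A.X.G T A.X.rt u).append (SimpleGraph.Walk.cons hadj
        (((tpath A.X.G T u v).map σh).copy hσu rfl))
    let W2 : A.X.G.Walk A.X.rt v :=
      (tpath A.X.G T A.X.rt u).append (tpath A.X.G T u v)
    have e1 : (ksum A.k W1 : ZMod 2) = ksum A.k (tpath A.X.G T A.X.rt (σ v)) :=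
      ksum_walk_parity T A.k W1
    have e1' : ksum A.k W1 = ksum A.k (tpath A.X.G T A.X.rt u)
        + (A.k s(u, w) + ksum A.k (tpath A.X.G T u v)) := by
      show ksum A.k (_root_.id W1) = _
      unfold W1
      simp only [id_eq]
      rw [ksum_append, ksum_cons, ksum_copy, hmapks]
    have e2 : (ksum A.k W2 : ZMod 2) = ksum A.k (tpath A.X.G T A.X.rt v) :=
      ksum_walk_parity T A.k W2
    have e2' : ksum A.k W2 = ksum A.k (tpath A.X.G T A.X.rt u)
        + ksum A.k (tpath A.X.G T u v) := by
      show ksum A.k (_root_.id W2) = _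
      unfold W2
      simp only [id_eq]
      rw [ksum_append]
    rw [kPdef, kPdef]
    have c1 : (ksum A.k (tpath A.X.G T A.X.rt (σ v)) : ZMod 2)
        = (ksum A.k (tpath A.X.G T A.X.rt u) : ZMod 2)
          + ((A.k s(u, w) : ZMod 2) + (ksum A.k (tpath A.X.G T u v) : ZMod 2)) := by
      rw [← e1, e1']; push_cast; ring
    have c2 : (ksum A.k (tpath A.X.G T A.X.rt v) : ZMod 2)
        = (ksum A.k (tpath A.X.G T A.X.rt u) : ZMod 2)
          + (ksum A.k (tpath A.X.G T u v) : ZMod 2) := by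
      rw [← e2, e2']; push_cast; ring
    rw [c1, c2]; ring
  have hsign : ∀ v : A.X.V, ((-1 : ℚ) ^ A.X.kP A.k A.X.rt (σ v))
      = -((-1 : ℚ) ^ A.X.kP A.k A.X.rt v) := by
    intro v
    have h1 := key v
    have h2 : ((A.X.kP A.k A.X.rt (σ v) : ℕ) : ZMod 2)
        = ((A.X.kP A.k A.X.rt v + A.k s(u, w) : ℕ) : ZMod 2) := by push_cast; exact h1
    have h3 : A.X.kP A.k A.X.rt (σ v) ≡ A.X.kP A.k A.X.rt v + A.k s(u, w) [MOD 2] :=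
      (ZMod.natCast_eq_natCast_iff _ _ _).mp h2
    rcases Nat.even_or_odd (A.X.kP A.k A.X.rt v) with he | ho
    · have ho2 : Odd (A.X.kP A.k A.X.rt (σ v)) := by
        rw [Nat.odd_iff]
        rw [Nat.ModEq] at h3
        rw [h3]
        exact Nat.odd_iff.mp (he.add_odd hodd)
      rw [ho2.neg_one_pow, he.neg_one_pow]
    · have he2 : Even (A.X.kP A.k A.X.rt (σ v)) := by
        rw [Nat.even_iff]
        rw [Nat.ModEq] at h3
        rw [h3]
        exact Nat.even_iff.mp (ho.add_odd hodd)
      rw [he2.neg_one_pow, ho.neg_one_pow]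
      norm_num
  have hquot : ∀ (v : A.X.V) (hv : v ∈ A.X.Vb),
      Quot.mk ICRT.Iso (A.reroot (σ v) ((hVbσ v).mp hv))
        = Quot.mk ICRT.Iso (A.reroot v hv) := by
    intro v hv
    refine (Quot.sound ?_).symm
    exact ⟨hσinv.toPerm, fun a b => hσadj a b, rfl, fun x => hVbσ x, fun a b h => hkσ a b h⟩
  unfold Phi
  refine Finset.sum_involution
    (fun a _ => (⟨σ a.1, (hVbσ a.1).mp a.2⟩ : {x // x ∈ A.X.Vb})) ?_ ?_
    (fun a _ => Finset.mem_attach _ _) ?_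
  · intro a ha
    dsimp only
    rw [hsign a.1, hquot a.1 a.2, neg_smul]
    exact add_neg_cancel _
  · intro a ha _ hEq
    have hval : σ a.1 = a.1 := congrArg Subtype.val hEq
    by_cases h1 : a.1 ∈ V1
    · exact hnot1 a.1 (hval ▸ hσm1 a.1 h1) h1
    · have h2 := hV2 a.1 h1
      exact h1 (hval ▸ hσm2 a.1 h2)
  · intro a ha
    exact Subtype.ext (hσinv a.1)
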